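/- For every finite simple graph G with no isolated vertex, the total Roman domination number of G is at most the total strong Roman domination number of G, which in turn is at most ⌈(Δ+1)/2⌉ times the total domination number of G, where Δ is the maximum degree of G. -/
import Mathlib


open Finset

variable {V : Type*} [Fintype V]

/-- The degree of a vertex. -/
noncomputable def degN (G : SimpleGraph V) (v : V) : ℕ := {u | G.Adj v u}.ncard

/-- Maximum degree. -/
noncomputable def maxDeg (G : SimpleGraph V) : ℕ := Finset.univ.sup (degN G)

/-- Minimum degree. -/
noncomputable def minDeg (G : SimpleGraph V) : ℕ := sInf {d | ∃ v, degN G v = d}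

/-- No isolated vertex. -/
def NoIsolated (G : SimpleGraph V) : Prop := ∀ v, ∃ u, G.Adj v u

/-- Total strong Roman dominating function. `(Δ+1)/2 = ⌈Δ/2⌉` and
`(m+1)/2 = ⌈m/2⌉` in natural-number arithmetic. -/
def IsTSRDF (G : SimpleGraph V) (f : V → ℕ) : Prop :=
  (∀ v, f v ≤ (maxDeg G + 1) / 2 + 1) ∧
  (∀ v, f v = 0 → ∃ u, G.Adj v u ∧
      1 + ({w | G.Adj u w ∧ f w = 0}.ncard + 1) / 2 ≤ f u) ∧
  (∀ v, 0 < f v → ∃ u, G.Adj v u ∧ 0 < f u)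

/-- The total strong Roman domination number. -/
noncomputable def tsrd (G : SimpleGraph V) : ℕ :=
  sInf {k | ∃ f : V → ℕ, IsTSRDF G f ∧ ∑ v, f v = k}

/-- Total Roman dominating function. -/
def IsTRDF (G : SimpleGraph V) (f : V → ℕ) : Prop :=
  (∀ v, f v ≤ 2) ∧
  (∀ v, f v = 0 → ∃ u, G.Adj v u ∧ f u = 2) ∧
  (∀ v, 0 < f v → ∃ u, G.Adj v u ∧ 0 < f u)

/-- Total Roman domination number. -/
noncomputable def trd (G : SimpleGraph V) : ℕ :=
  sInf {k | ∃ f : V → ℕ, IsTRDF G f ∧ ∑ v, f v = k}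

/-- Total dominating set. -/
def IsTDS (G : SimpleGraph V) (S : Finset V) : Prop := ∀ v, ∃ u ∈ S, G.Adj v u

/-- Total domination number. -/
noncomputable def td (G : SimpleGraph V) : ℕ :=
  sInf {k | ∃ S : Finset V, IsTDS G S ∧ S.card = k}

theorem stmt0 (G : SimpleGraph V) (hni : NoIsolated G) :
    trd G ≤ tsrd G ∧ tsrd G ≤ (maxDeg G + 2) / 2 * td G := by
  classical
  constructor
  · -- trd ≤ tsrd
    have hne : {k | ∃ f : V → ℕ, IsTSRDF G f ∧ ∑ v, f v = k}.Nonempty := by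
      refine ⟨∑ _v : V, ((maxDeg G + 1) / 2 + 1),
        fun _ => (maxDeg G + 1) / 2 + 1,
        ⟨fun v => le_rfl, fun v h => ?_, fun v _ => ?_⟩, rfl⟩
      · simp at h
      · obtain ⟨u, hu⟩ := hni v
        exact ⟨u, hu, by simp⟩
    obtain ⟨f, hf, hsum⟩ := Nat.sInf_mem hne
    clear hni
    have hgtrdf : IsTRDF G (fun v => min (f v) 2) := by
      clear hsum hne
      refine ⟨fun v => min_le_right _ _, ?_, ?_⟩
      · intro v hv
        dsimp only at hv ⊢
        have hfv : f v = 0 := by omega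
        obtain ⟨u, hadj, hu⟩ := hf.2.1 v hfv
        have hmem : v ∈ {w | G.Adj u w ∧ f w = 0} := ⟨hadj.symm, hfv⟩
        have hpos : 0 < {w | G.Adj u w ∧ f w = 0}.ncard :=
          (Set.ncard_pos (Set.toFinite _)).2 ⟨v, hmem⟩
        exact ⟨u, hadj, by omega⟩
      · intro v hv
        dsimp only at hv ⊢
        have hfv : 0 < f v := by omega
        obtain ⟨u, hadj, hu⟩ := hf.2.2 v hfv
        exact ⟨u, hadj, by omega⟩
    calc trd G ≤ ∑ v, min (f v) 2 := Nat.sInf_le ⟨_, hgtrdf, rfl⟩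
      _ ≤ ∑ v, f v := Finset.sum_le_sum fun v _ => min_le_left _ _
      _ = tsrd G := hsum
  · -- tsrd ≤ (Δ+2)/2 * td
    have hne : {k | ∃ S : Finset V, IsTDS G S ∧ S.card = k}.Nonempty := by
      refine ⟨Finset.univ.card, Finset.univ, fun v => ?_, rfl⟩
      obtain ⟨u, hu⟩ := hni v
      exact ⟨u, Finset.mem_univ u, hu⟩
    obtain ⟨S, hS, hcard⟩ := Nat.sInf_mem hne
    have hdeg : ∀ u : V, degN G u ≤ maxDeg G := fun u =>
      Finset.le_sup (Finset.mem_univ u)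
    have key : ∀ u ∈ S,
        {w | G.Adj u w ∧ (if w ∈ S then (maxDeg G + 2) / 2 else 0) = 0}.ncard + 1
          ≤ maxDeg G := by
      intro u huS
      obtain ⟨w₀, hw₀S, hw₀adj⟩ := hS u
      have hss : {w | G.Adj u w ∧ (if w ∈ S then (maxDeg G + 2) / 2 else 0) = 0}
          ⊂ {w | G.Adj u w} := by
        refine ⟨fun w hw => hw.1, fun h => ?_⟩
        have := (h hw₀adj).2
        rw [if_pos hw₀S] at this
        omega
      have h1 := Set.ncard_lt_ncard hss (Set.toFinite _)
      have h2 : {w | G.Adj u w}.ncard = degN G u := rfl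
      have h3 := hdeg u
      omega
    have hTS : IsTSRDF G (fun v => if v ∈ S then (maxDeg G + 2) / 2 else 0) := by
      refine ⟨fun v => ?_, fun v hv => ?_, fun v _ => ?_⟩
      · dsimp only
        split <;> omega
      · dsimp only at hv ⊢
        obtain ⟨u, huS, hadj⟩ := hS v
        refine ⟨u, hadj, ?_⟩
        have := key u huS
        rw [if_pos huS]
        omega
      · obtain ⟨u, huS, hadj⟩ := hS v
        refine ⟨u, hadj, ?_⟩
        dsimp only
        rw [if_pos huS]
        omega
    have hsum : ∑ v, (if v ∈ S then (maxDeg G + 2) / 2 else 0) =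
        (maxDeg G + 2) / 2 * S.card := by
      rw [Finset.sum_ite_mem, Finset.univ_inter, Finset.sum_const, smul_eq_mul,
        mul_comm]
    calc tsrd G ≤ ∑ v, (if v ∈ S then (maxDeg G + 2) / 2 else 0) :=
        Nat.sInf_le ⟨_, hTS, rfl⟩
      _ = (maxDeg G + 2) / 2 * td G := by rw [hsum, hcard]; rfl
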